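/- Let ∼ be the equivalence relation on V × S¹ generated by (x, t) ∼ (t·x, 1) for all x ∈ V₀ and t ∈ S¹. Then the map Ψ(x, t) = t·x descends to a well-defined map Ψ̂ : (V × S¹)/∼ → T⁷, and Ψ̂ is a homeomorphism (where V × S¹ carries the subspace-product topology and the quotient carries the quotient topology). -/

import Mathlib

open scoped BigOperators

/-- The 7-torus `T⁷ = (S¹)⁷ ⊂ ℂ⁷`. -/
def Torus7 : Set (Fin 7 → ℂ) := {z | ∀ i, ‖z i‖ = 1}

/-- `V = {z ∈ T⁷ : Σᵢ Re zᵢ = 0 and Σᵢ Im zᵢ ≤ 0}`. -/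
def VSet : Set (Fin 7 → ℂ) :=
  {z | (∀ i, ‖z i‖ = 1) ∧ (∑ i, (z i).re) = 0 ∧ (∑ i, (z i).im) ≤ 0}

/-- The unit circle `S¹ ⊂ ℂ`. -/
def S1 : Set ℂ := {t | ‖t‖ = 1}

/-- The relation on `V × S¹` generating the equivalence relation `∼`:
`(x, t) ∼ (t·x, 1)` whenever `x ∈ V₀`, i.e. `Σᵢ xᵢ = 0`. -/
def glueRel (p q : ↥VSet × ↥S1) : Prop :=
  (∑ i, (p.1 : Fin 7 → ℂ) i) = 0 ∧
  (∀ i, (q.1 : Fin 7 → ℂ) i = (p.2 : ℂ) * (p.1 : Fin 7 → ℂ) i) ∧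
  (q.2 : ℂ) = 1

noncomputable section PsiAux

def Psi (p : ↥VSet × ↥S1) : ↥Torus7 :=
  ⟨fun i => (p.2 : ℂ) * (p.1 : Fin 7 → ℂ) i, fun i => by
    rw [norm_mul, p.2.2, p.1.2.1 i, mul_one]⟩

lemma Psi_respects {p q : ↥VSet × ↥S1} (h : glueRel p q) : Psi p = Psi q := by
  obtain ⟨-, h2, h3⟩ := h
  apply Subtype.ext
  funext i
  show (p.2 : ℂ) * (p.1 : Fin 7 → ℂ) i = (q.2 : ℂ) * (q.1 : Fin 7 → ℂ) i
  rw [h3, h2 i, one_mul]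

lemma Psi_continuous : Continuous Psi := by
  apply Continuous.subtype_mk
  apply continuous_pi
  intro i
  exact ((continuous_subtype_val.comp continuous_snd)).mul
    ((continuous_apply i).comp (continuous_subtype_val.comp continuous_fst))

lemma VSet_sum (x : ↥VSet) :
    (∑ i, (x : Fin 7 → ℂ) i) = Complex.I * ((∑ i, ((x : Fin 7 → ℂ) i).im) : ℝ) := by
  apply Complex.ext
  · simp [Complex.re_sum, x.2.2.1]
  · simp [Complex.im_sum]

lemma Psi_surjective : Function.Surjective Psi := by
  rintro ⟨w, hw⟩
  set s : ℂ := ∑ i, w i with hs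
  by_cases h0 : s = 0
  · refine ⟨(⟨w, hw, ?_, ?_⟩, ⟨1, by simp [S1]⟩), ?_⟩
    · rw [← Complex.re_sum, ← hs, h0, Complex.zero_re]
    · rw [← Complex.im_sum, ← hs, h0, Complex.zero_im]
    · apply Subtype.ext; funext i; exact one_mul _
  · have hns : ‖s‖ ≠ 0 := norm_ne_zero_iff.mpr h0
    have hsc : ((‖s‖ : ℝ) : ℂ) ≠ 0 := by exact_mod_cast hns
    set t : ℂ := Complex.I * s * ((‖s‖ : ℝ) : ℂ)⁻¹ with ht
    have htn : ‖t‖ = 1 := by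
      rw [ht, norm_mul, norm_mul, Complex.norm_I, one_mul, norm_inv,
        Complex.norm_real, norm_norm, mul_inv_cancel₀ hns]
    have hts : (starRingEnd ℂ) t * s = -Complex.I * ‖s‖ := by
      rw [ht]
      simp only [map_mul, Complex.conj_I, map_inv₀, Complex.conj_ofReal]
      rw [mul_assoc, mul_assoc, mul_comm _ s, ← mul_assoc ((starRingEnd ℂ) s),
        Complex.conj_mul', sq, mul_inv_cancel_right₀ hsc]
    have hxmem : (fun i => (starRingEnd ℂ) t * w i) ∈ VSet := by
      refine ⟨fun i => by rw [norm_mul, RCLike.norm_conj, htn, hw i, mul_one], ?_, ?_⟩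
      · rw [← Complex.re_sum, ← Finset.mul_sum, ← hs, hts]
        simp
      · rw [← Complex.im_sum, ← Finset.mul_sum, ← hs, hts]
        simp [norm_nonneg]
    refine ⟨(⟨_, hxmem⟩, ⟨t, htn⟩), ?_⟩
    apply Subtype.ext
    funext i
    show t * ((starRingEnd ℂ) t * w i) = w i
    rw [← mul_assoc, Complex.mul_conj, Complex.normSq_eq_norm_sq, htn]
    norm_num

lemma S1_ne_zero (t : ↥S1) : (t : ℂ) ≠ 0 := by
  intro h
  have := t.2
  rw [h] at this
  simp [S1] at this

lemma quot_eq_of_Psi_eq (p q : ↥VSet × ↥S1) (h : Psi p = Psi q) :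
    Quot.mk glueRel p = Quot.mk glueRel q := by
  obtain ⟨x, t⟩ := p
  obtain ⟨x', t'⟩ := q
  have h' : ∀ i, (t : ℂ) * (x : Fin 7 → ℂ) i = (t' : ℂ) * (x' : Fin 7 → ℂ) i :=
    fun i => congrFun (congrArg Subtype.val h) i
  have hsum : (t : ℂ) * (∑ i, (x : Fin 7 → ℂ) i)
      = (t' : ℂ) * (∑ i, (x' : Fin 7 → ℂ) i) := by
    rw [Finset.mul_sum, Finset.mul_sum]
    exact Finset.sum_congr rfl fun i _ => h' i
  by_cases hb : (∑ i, (x : Fin 7 → ℂ) i) = 0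
  · have hb' : (∑ i, (x' : Fin 7 → ℂ) i) = 0 := by
      have h0 : (t' : ℂ) * (∑ i, (x' : Fin 7 → ℂ) i) = 0 := by
        rw [← hsum, hb, mul_zero]
      exact (mul_eq_zero.mp h0).resolve_left (S1_ne_zero t')
    have hmsum : (∑ i, (t : ℂ) * (x : Fin 7 → ℂ) i) = 0 := by
      rw [← Finset.mul_sum, hb, mul_zero]
    have hmem : (fun i => (t : ℂ) * (x : Fin 7 → ℂ) i) ∈ VSet := by
      refine ⟨fun i => by rw [norm_mul, t.2, x.2.1 i, mul_one], ?_, ?_⟩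
      · rw [← Complex.re_sum, hmsum, Complex.zero_re]
      · rw [← Complex.im_sum, hmsum, Complex.zero_im]
    have e1 : Quot.mk glueRel (x, t)
        = Quot.mk glueRel (⟨_, hmem⟩, ⟨1, by simp [S1]⟩) :=
      Quot.sound ⟨hb, fun i => rfl, rfl⟩
    have e2 : Quot.mk glueRel (x', t')
        = Quot.mk glueRel (⟨_, hmem⟩, ⟨1, by simp [S1]⟩) :=
      Quot.sound ⟨hb', fun i => h' i, rfl⟩
    rw [e1, e2]
  · -- sums are nonzero; show the points are literally equal
    have hx := VSet_sum x
    have hx' := VSet_sum x'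
    have hn : ‖∑ i, (x : Fin 7 → ℂ) i‖ = ‖∑ i, (x' : Fin 7 → ℂ) i‖ := by
      have := congrArg norm hsum
      rwa [norm_mul, norm_mul, t.2, t'.2, one_mul, one_mul] at this
    have habs : |∑ i, ((x : Fin 7 → ℂ) i).im| = |∑ i, ((x' : Fin 7 → ℂ) i).im| := by
      rw [hx, hx', norm_mul, norm_mul, Complex.norm_I, one_mul, one_mul,
        Complex.norm_real, Complex.norm_real, Real.norm_eq_abs, Real.norm_eq_abs] at hn
      exact hn
    have hbb : (∑ i, ((x : Fin 7 → ℂ) i).im) = ∑ i, ((x' : Fin 7 → ℂ) i).im := by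
      have h1 := x.2.2.2
      have h2 := x'.2.2.2
      rw [abs_of_nonpos h1, abs_of_nonpos h2] at habs
      linarith
    have hsum_eq : (∑ i, (x : Fin 7 → ℂ) i) = ∑ i, (x' : Fin 7 → ℂ) i := by
      rw [hx, hx', hbb]
    have ht_eq : (t : ℂ) = t' := by
      apply mul_right_cancel₀ hb
      rw [hsum, hsum_eq]
    have hx_eq : x = x' := by
      apply Subtype.ext
      funext i
      exact mul_left_cancel₀ (S1_ne_zero t) (by rw [h' i, ht_eq])
    have ht_eq' : t = t' := Subtype.ext ht_eq
    rw [hx_eq, ht_eq']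

lemma isCompact_VSet : IsCompact VSet := by
  apply Metric.isCompact_of_isClosed_isBounded
  · have hrepr : VSet = (⋂ i, {z : Fin 7 → ℂ | ‖z i‖ = 1}) ∩
        ({z | (∑ i, (z i).re) = 0} ∩ {z | (∑ i, (z i).im) ≤ 0}) := by
      ext z
      simp [VSet, Set.mem_iInter, and_assoc]
    rw [hrepr]
    refine (isClosed_iInter fun i => isClosed_eq ((continuous_apply i).norm)
      continuous_const).inter (IsClosed.inter ?_ ?_)
    · exact isClosed_eq (continuous_finset_sum _ fun i _ =>
        Complex.continuous_re.comp (continuous_apply i)) continuous_const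
    · exact isClosed_le (continuous_finset_sum _ fun i _ =>
        Complex.continuous_im.comp (continuous_apply i)) continuous_const
  · rw [isBounded_iff_forall_norm_le]
    refine ⟨1, fun z hz => ?_⟩
    rw [pi_norm_le_iff_of_nonneg zero_le_one]
    exact fun i => le_of_eq (hz.1 i)

lemma isCompact_S1 : IsCompact S1 := by
  have : S1 = Metric.sphere (0 : ℂ) 1 := by
    ext t
    simp [S1, Metric.mem_sphere, dist_zero_right]
  rw [this]
  exact isCompact_sphere 0 1

instance : CompactSpace ↥VSet := isCompact_iff_compactSpace.mp isCompact_VSet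
instance : CompactSpace ↥S1 := isCompact_iff_compactSpace.mp isCompact_S1

end PsiAux


/-- The map `Ψ(x,t) = t·x` descends to a well-defined map on the quotient of `V × S¹` by
the equivalence relation generated by `(x,t) ∼ (t·x, 1)` for `x ∈ V₀`, and the descended
map is a homeomorphism onto `T⁷` (with the quotient topology on the source and the subspace
topology on the target). -/
theorem psi_descends_to_homeomorph :
    ∃ Ψhat : Quot glueRel ≃ₜ ↥Torus7,
      ∀ p : ↥VSet × ↥S1,
        ((Ψhat (Quot.mk glueRel p) : Fin 7 → ℂ)) =
          fun i => (p.2 : ℂ) * (p.1 : Fin 7 → ℂ) i := by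
  let f : Quot glueRel → ↥Torus7 := Quot.lift Psi fun p q h => Psi_respects h
  have hinj : Function.Injective f := by
    intro a b
    induction a using Quot.ind with | _ p =>
    induction b using Quot.ind with | _ q =>
    exact quot_eq_of_Psi_eq p q
  have hsurj : Function.Surjective f := fun w => by
    obtain ⟨p, hp⟩ := Psi_surjective w
    exact ⟨Quot.mk _ p, hp⟩
  let e : Quot glueRel ≃ ↥Torus7 := Equiv.ofBijective f ⟨hinj, hsurj⟩
  have hcont : Continuous e :=
    continuous_quot_lift _ Psi_continuous
  refine ⟨hcont.homeoOfEquivCompactToT2, fun p => ?_⟩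
  show ((Psi p : ↥Torus7) : Fin 7 → ℂ) = _
  rfl
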